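/- arXiv:2007.12434 — 2 statements merged into one kernel-verified Lean document; each statement's English description precedes it below -/
import Mathlib

section
/- If G is a connected graph and uv is a cut-edge of G (an edge whose removal disconnects G) with d(u) ≥ 2 and d(v) ≥ 2, then q(G) ≥ 2/3. -/
open SimpleGraph Set
open scoped Classical

/-- The degree ratio of a vertex `v` with respect to the partition `(s, sᶜ)`:
the size of its closed neighborhood inside its own side divided by the size of
its closed neighborhood in `G`. -/
noncomputable def vertexRatio {V : Type*} (G : SimpleGraph V) (s : Set V) (v : V) : ℝ :=
  (((G.neighborSet v ∩ (if v ∈ s then s else sᶜ)).ncard : ℝ) + 1) /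
    (((G.neighborSet v).ncard : ℝ) + 1)

/-- The worst (minimum) degree ratio over all vertices, for the partition `(s, sᶜ)`. -/
noncomputable def minRatio {V : Type*} (G : SimpleGraph V) (s : Set V) : ℝ :=
  sInf (Set.range (vertexRatio G s))

/-- The optimal degree ratio `q(G)`: the maximum over all nontrivial partitions
of the worst degree ratio. -/
noncomputable def degreeRatio {V : Type*} (G : SimpleGraph V) : ℝ :=
  sSup { r : ℝ | ∃ s : Set V, s.Nonempty ∧ sᶜ.Nonempty ∧ r = minRatio G s }

lemma vertexRatio_nonneg {V : Type*} (G : SimpleGraph V) (s : Set V) (v : V) :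
    0 ≤ vertexRatio G s v := by
  unfold vertexRatio
  positivity

lemma vertexRatio_le_one {V : Type*} [Fintype V] (G : SimpleGraph V) (s : Set V) (v : V) :
    vertexRatio G s v ≤ 1 := by
  unfold vertexRatio
  rw [div_le_one (by positivity)]
  have h : (G.neighborSet v ∩ (if v ∈ s then s else sᶜ)).ncard ≤ (G.neighborSet v).ncard :=
    Set.ncard_le_ncard (Set.inter_subset_left) (Set.toFinite _)
  have h2 : ((G.neighborSet v ∩ (if v ∈ s then s else sᶜ)).ncard : ℝ) ≤
      ((G.neighborSet v).ncard : ℝ) := by exact_mod_cast h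
  linarith

lemma reach_aux {V : Type*} (G : SimpleGraph V) (u v : V)
    (h : (G.deleteEdges {s(u, v)}).Reachable u v) :
    ∀ {x y : V}, G.Walk x y → (G.deleteEdges {s(u, v)}).Reachable x y := by
  intro x y p
  induction p with
  | nil => exact Reachable.refl _
  | cons hadj _ ih =>
    rename_i a b c _
    refine Reachable.trans ?_ ih
    by_cases he : s(a, b) = s(u, v)
    · rw [Sym2.eq_iff] at he
      rcases he with ⟨rfl, rfl⟩ | ⟨rfl, rfl⟩
      · exact h
      · exact h.symm
    · exact Adj.reachable (by simp [hadj, he])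

theorem stmt_8 {V : Type*} [Fintype V] (G : SimpleGraph V) (hG : G.Connected)
    (u v : V) (huv : G.Adj u v)
    (hcut : ¬ (G.deleteEdges {s(u, v)}).Connected)
    (hu : 2 ≤ (G.neighborSet u).ncard) (hv : 2 ≤ (G.neighborSet v).ncard) :
    2 / 3 ≤ degreeRatio G := by
  classical
  set G' := G.deleteEdges {s(u, v)} with hG'
  have hne : Nonempty V := hG.nonempty
  -- u and v are not reachable in G'
  have hruv : ¬ G'.Reachable u v := by
    intro h
    apply hcut
    rw [connected_iff]
    refine ⟨fun x y => ?_, hne⟩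
    obtain ⟨p⟩ := hG.preconnected x y
    exact reach_aux G u v h p
  set S : Set V := {w | G'.Reachable u w} with hS
  have hus : u ∈ S := Reachable.refl _
  have hvs : v ∉ S := hruv
  -- adjacency in G with edge ≠ s(u,v) preserves S-membership
  have hmem : ∀ a b : V, G.Adj a b → s(a, b) ≠ s(u, v) → (a ∈ S ↔ b ∈ S) := by
    intro a b hab he
    have : G'.Adj a b := by simp [hG', hab, he]
    constructor
    · intro h; exact h.trans this.reachable
    · intro h; exact h.trans this.symm.reachable
  -- key ratio bounds
  have key : ∀ w : V, 2 / 3 ≤ vertexRatio G S w := by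
    intro w
    by_cases hwu : w = u
    · have hwS : w ∈ S := hwu ▸ hus
      have hset : G.neighborSet w ∩ S = G.neighborSet w \ {v} := by
        ext x
        simp only [Set.mem_inter_iff, Set.mem_diff, Set.mem_singleton_iff]
        constructor
        · rintro ⟨hx, hxS⟩
          exact ⟨hx, fun h => hvs (h ▸ hxS)⟩
        · rintro ⟨hx, hxv⟩
          refine ⟨hx, ?_⟩
          have he : s(w, x) ≠ s(u, v) := by
            intro h
            rcases Sym2.eq_iff.mp h with ⟨h1, h2⟩ | ⟨h1, h2⟩
            · exact hxv h2
            · exact (G.ne_of_adj huv) ((hwu ▸ h1 : u = v))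
          exact (hmem w x hx he).mp hwS
      have hvmem : v ∈ G.neighborSet w := hwu ▸ huv
      have hcard : (G.neighborSet w \ {v}).ncard = (G.neighborSet w).ncard - 1 :=
        Set.ncard_diff_singleton_of_mem hvmem
      unfold vertexRatio
      rw [if_pos hwS, hset, hcard]
      set d := (G.neighborSet w).ncard with hd
      have hd2 : 2 ≤ d := by rw [hd, hwu]; exact hu
      rw [div_le_div_iff₀ (by norm_num) (by positivity)]
      have : (d : ℝ) - 1 = ((d - 1 : ℕ) : ℝ) := by
        push_cast [Nat.cast_sub (by omega : 1 ≤ d)]; ring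
      rw [← this]
      have : (2 : ℝ) ≤ d := by exact_mod_cast hd2
      linarith
    · by_cases hwv : w = v
      · have hvmem' : w ∉ S := hwv ▸ hvs
        have hset : G.neighborSet w ∩ Sᶜ = G.neighborSet w \ {u} := by
          ext x
          simp only [Set.mem_inter_iff, Set.mem_diff, Set.mem_singleton_iff, Set.mem_compl_iff]
          constructor
          · rintro ⟨hx, hxS⟩
            exact ⟨hx, fun h => hxS (h ▸ hus)⟩
          · rintro ⟨hx, hxu⟩
            refine ⟨hx, fun hxS => ?_⟩
            have he : s(w, x) ≠ s(u, v) := by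
              intro h
              rcases Sym2.eq_iff.mp h with ⟨h1, h2⟩ | ⟨h1, h2⟩
              · exact (G.ne_of_adj huv) (hwv ▸ h1).symm
              · exact hxu h2
            exact hvmem' ((hmem w x hx he).mpr hxS)
        have humem : u ∈ G.neighborSet w := hwv ▸ huv.symm
        have hcard : (G.neighborSet w \ {u}).ncard = (G.neighborSet w).ncard - 1 :=
          Set.ncard_diff_singleton_of_mem humem
        unfold vertexRatio
        rw [if_neg hvmem', hset, hcard]
        set d := (G.neighborSet w).ncard with hd
        have hd2 : 2 ≤ d := by rw [hd, hwv]; exact hv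
        rw [div_le_div_iff₀ (by norm_num) (by positivity)]
        have : (d : ℝ) - 1 = ((d - 1 : ℕ) : ℝ) := by
          push_cast [Nat.cast_sub (by omega : 1 ≤ d)]; ring
        rw [← this]
        have : (2 : ℝ) ≤ d := by exact_mod_cast hd2
        linarith
      · -- w is neither u nor v: all neighbors on the same side
        have hall : ∀ x ∈ G.neighborSet w, (x ∈ S ↔ w ∈ S) := by
          intro x hx
          have he : s(w, x) ≠ s(u, v) := by
            intro h
            rcases Sym2.eq_iff.mp h with ⟨h1, h2⟩ | ⟨h1, h2⟩
            · exact hwu h1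
            · exact hwv h1
          exact (hmem w x hx he).symm
        by_cases hwS : w ∈ S
        · have hset : G.neighborSet w ∩ S = G.neighborSet w := by
            apply Set.inter_eq_left.mpr
            intro x hx; exact (hall x hx).mpr hwS
          unfold vertexRatio
          rw [if_pos hwS, hset, div_self (by positivity)]
          norm_num
        · have hset : G.neighborSet w ∩ Sᶜ = G.neighborSet w := by
            apply Set.inter_eq_left.mpr
            intro x hx
            exact fun hxS => hwS ((hall x hx).mp hxS)
          unfold vertexRatio
          rw [if_neg hwS, hset, div_self (by positivity)]
          norm_num
  -- minRatio G S ≥ 2/3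
  have hmin : 2 / 3 ≤ minRatio G S := by
    apply le_csInf (Set.range_nonempty _)
    rintro r ⟨w, rfl⟩
    exact key w
  -- degreeRatio is the sup of a set containing minRatio G S
  refine le_trans hmin (le_csSup ?_ ?_)
  · refine ⟨1, fun r hr => ?_⟩
    obtain ⟨s', _, _, rfl⟩ := hr
    obtain ⟨x⟩ := hne
    calc minRatio G s' ≤ vertexRatio G s' x := by
          refine csInf_le ⟨0, fun r hr => ?_⟩ ⟨x, rfl⟩
          obtain ⟨y, rfl⟩ := hr
          exact vertexRatio_nonneg G s' y
      _ ≤ 1 := vertexRatio_le_one G s' x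
  · exact ⟨S, ⟨u, hus⟩, ⟨v, hvs⟩, rfl⟩
end

section
/- For all connected graphs G and H, each with at least two vertices, q(G □ H) > max(q(G), q(H)). -/
open SimpleGraph Set
open scoped Classical

section Aux

variable {V W : Type*} [Fintype V] [Fintype W]

lemma minRatio_le (G : SimpleGraph V) (s : Set V) [Nonempty V] (v : V) :
    minRatio G s ≤ vertexRatio G s v :=
  csInf_le (Set.finite_range _).bddBelow (Set.mem_range_self v)

lemma minRatio_attained (G : SimpleGraph V) (s : Set V) [Nonempty V] :
    ∃ v, minRatio G s = vertexRatio G s v := by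
  obtain ⟨v, hv⟩ := (Set.range_nonempty (vertexRatio G s)).csInf_mem
    (Set.finite_range _)
  exact ⟨v, hv.symm⟩

lemma degSet_finite (G : SimpleGraph V) :
    {r : ℝ | ∃ s : Set V, s.Nonempty ∧ sᶜ.Nonempty ∧ r = minRatio G s}.Finite := by
  apply (Set.finite_range (minRatio G)).subset
  rintro r ⟨s, -, -, rfl⟩
  exact Set.mem_range_self s

lemma degSet_nonempty (G : SimpleGraph V) (hV : Nontrivial V) :
    {r : ℝ | ∃ s : Set V, s.Nonempty ∧ sᶜ.Nonempty ∧ r = minRatio G s}.Nonempty := by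
  obtain ⟨v, w, hvw⟩ := hV
  exact ⟨minRatio G {v}, {v}, ⟨v, rfl⟩, ⟨w, by simp [hvw.symm]⟩, rfl⟩

lemma exists_cross {G : SimpleGraph V} (hG : G.Connected) {s : Set V}
    (hs : s.Nonempty) (hs' : sᶜ.Nonempty) :
    ∃ u u', G.Adj u u' ∧ u ∈ s ∧ u' ∉ s := by
  obtain ⟨a, ha⟩ := hs
  obtain ⟨b, hb⟩ := hs'
  obtain ⟨p⟩ := hG a b
  have key : ∀ {a b : V} (_ : G.Walk a b), a ∈ s → b ∉ s →
      ∃ u u', G.Adj u u' ∧ u ∈ s ∧ u' ∉ s := by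
    intro a b p
    induction p with
    | nil => intro h h'; exact absurd h h'
    | @cons x y z h p ih =>
      intro ha hb
      by_cases hc : y ∈ s
      · exact ih hc hb
      · exact ⟨x, y, h, ha, hc⟩
  exact key p ha hb

lemma minRatio_lt_one {G : SimpleGraph V} (hG : G.Connected) {s : Set V}
    (hs : s.Nonempty) (hs' : sᶜ.Nonempty) : minRatio G s < 1 := by
  obtain ⟨u, u', hadj, hu, hu'⟩ := exists_cross hG hs hs'
  have : Nonempty V := ⟨u⟩
  refine lt_of_le_of_lt (minRatio_le G s u) ?_
  unfold vertexRatio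
  rw [if_pos hu]
  have hsub : G.neighborSet u ∩ s ⊂ G.neighborSet u := by
    refine ⟨Set.inter_subset_left, fun hsup => ?_⟩
    exact hu' (hsup (G.mem_neighborSet u u' |>.mpr hadj)).2
  have hlt := Set.ncard_lt_ncard hsub (Set.toFinite _)
  rw [div_lt_one (by positivity)]
  exact_mod_cast Nat.add_lt_add_right hlt 1

lemma exists_neighbor {H : SimpleGraph W} (hH : H.Connected) (hW : Nontrivial W)
    (w : W) : (H.neighborSet w).Nonempty := by
  obtain ⟨w', hw'⟩ := exists_ne w
  obtain ⟨p⟩ := hH w w'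
  cases p with
  | nil => exact absurd rfl hw'.symm
  | cons h _ => exact ⟨_, h⟩

lemma ncard_mixed_union {v : V} {w : W} (P : Set V) (Q : Set W)
    (hP : ∀ a ∈ P, a ≠ v) :
    (P ×ˢ ({w} : Set W) ∪ ({v} : Set V) ×ˢ Q).ncard = P.ncard + Q.ncard := by
  rw [Set.ncard_union_eq ?disj (Set.toFinite _) (Set.toFinite _)]
  · congr 1
    · have h1 : P ×ˢ ({w} : Set W) = (fun a => (a, w)) '' P := by
        ext ⟨a, b⟩
        simp [Set.mem_prod, eq_comm, and_comm]
      rw [h1, Set.ncard_image_of_injective _ (fun a b h => congrArg Prod.fst h)]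
    · have h2 : ({v} : Set V) ×ˢ Q = (fun b => (v, b)) '' Q := by
        ext ⟨a, b⟩
        simp [Set.mem_prod, eq_comm, and_comm]
      rw [h2, Set.ncard_image_of_injective _ (fun a b h => congrArg Prod.snd h)]
  case disj =>
    rw [Set.disjoint_left]
    rintro ⟨a, b⟩ ⟨haP, -⟩ ⟨hav, -⟩
    exact hP a haP hav

lemma ratio_step {q : ℝ} {a b c : ℕ} (hab : a ≤ b) (hc : 1 ≤ c)
    (hq1 : q < 1) (hqv : q ≤ ((a : ℝ) + 1) / ((b : ℝ) + 1)) :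
    q < ((a : ℝ) + (c : ℝ) + 1) / ((b : ℝ) + (c : ℝ) + 1) := by
  rcases eq_or_lt_of_le hab with rfl | hlt
  · rw [div_self (by positivity)]
    exact hq1
  · refine lt_of_le_of_lt hqv ?_
    rw [div_lt_div_iff₀ (by positivity) (by positivity)]
    have h1 : (a : ℝ) < b := by exact_mod_cast hlt
    have h2 : (1 : ℝ) ≤ c := by exact_mod_cast hc
    nlinarith

lemma compl_prod_univ (s : Set V) :
    (s ×ˢ (Set.univ : Set W))ᶜ = sᶜ ×ˢ (Set.univ : Set W) := by
  ext ⟨a, b⟩; simp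

lemma univ_prod_compl (s : Set W) :
    ((Set.univ : Set V) ×ˢ s)ᶜ = (Set.univ : Set V) ×ˢ sᶜ := by
  ext ⟨a, b⟩; simp

lemma boxProd_nbhd_ncard (G : SimpleGraph V) (H : SimpleGraph W) (v : V) (w : W) :
    ((G □ H).neighborSet (v, w)).ncard
      = (G.neighborSet v).ncard + (H.neighborSet w).ncard := by
  rw [neighborSet_boxProd]
  exact ncard_mixed_union _ _ (fun a ha => (G.ne_of_adj ha).symm)

lemma boxProd_inter_left (G : SimpleGraph V) (H : SimpleGraph W)
    (v : V) (w : W) (t : Set V) (hv : v ∈ t) :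
    (G □ H).neighborSet (v, w) ∩ t ×ˢ (Set.univ : Set W)
      = (G.neighborSet v ∩ t) ×ˢ ({w} : Set W)
        ∪ ({v} : Set V) ×ˢ H.neighborSet w := by
  rw [neighborSet_boxProd]
  ext ⟨a, b⟩
  simp only [Set.mem_inter_iff, Set.mem_union, Set.mem_prod, Set.mem_singleton_iff,
    Set.mem_univ, and_true]
  constructor
  · rintro ⟨h | h, hat⟩
    · exact Or.inl ⟨⟨h.1, hat⟩, h.2⟩
    · exact Or.inr h
  · rintro (⟨⟨h1, h2⟩, h3⟩ | ⟨h1, h2⟩)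
    · exact ⟨Or.inl ⟨h1, h3⟩, h2⟩
    · exact ⟨Or.inr ⟨h1, h2⟩, h1 ▸ hv⟩

lemma boxProd_inter_right (G : SimpleGraph V) (H : SimpleGraph W)
    (v : V) (w : W) (t : Set W) (hw : w ∈ t) :
    (G □ H).neighborSet (v, w) ∩ (Set.univ : Set V) ×ˢ t
      = (G.neighborSet v) ×ˢ ({w} : Set W)
        ∪ ({v} : Set V) ×ˢ (H.neighborSet w ∩ t) := by
  rw [neighborSet_boxProd]
  ext ⟨a, b⟩
  simp only [Set.mem_inter_iff, Set.mem_union, Set.mem_prod, Set.mem_singleton_iff,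
    Set.mem_univ, true_and]
  constructor
  · rintro ⟨h | h, hbt⟩
    · exact Or.inl h
    · exact Or.inr ⟨h.1, h.2, hbt⟩
  · rintro (⟨h1, h2⟩ | ⟨h1, h2, h3⟩)
    · exact ⟨Or.inl ⟨h1, h2⟩, h2 ▸ hw⟩
    · exact ⟨Or.inr ⟨h1, h2⟩, h3⟩

lemma vertexRatio_boxProd_left (G : SimpleGraph V) (H : SimpleGraph W)
    (s : Set V) (v : V) (w : W) :
    vertexRatio (G □ H) (s ×ˢ (Set.univ : Set W)) (v, w)
      = (((G.neighborSet v ∩ (if v ∈ s then s else sᶜ)).ncard : ℝ)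
          + ((H.neighborSet w).ncard : ℝ) + 1)
        / (((G.neighborSet v).ncard : ℝ) + ((H.neighborSet w).ncard : ℝ) + 1) := by
  unfold vertexRatio
  rw [boxProd_nbhd_ncard]
  by_cases hvs : v ∈ s
  · rw [if_pos (show (v, w) ∈ s ×ˢ (Set.univ : Set W) from ⟨hvs, Set.mem_univ _⟩),
      if_pos hvs, boxProd_inter_left G H v w s hvs,
      ncard_mixed_union _ _ (fun a ha => (G.ne_of_adj ha.1).symm)]
    push_cast
    ring_nf
  · rw [if_neg (show (v, w) ∉ s ×ˢ (Set.univ : Set W) from fun h => hvs h.1),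
      if_neg hvs, compl_prod_univ, boxProd_inter_left G H v w sᶜ hvs,
      ncard_mixed_union _ _ (fun a ha => (G.ne_of_adj ha.1).symm)]
    push_cast
    ring_nf

lemma vertexRatio_boxProd_right (G : SimpleGraph V) (H : SimpleGraph W)
    (s : Set W) (v : V) (w : W) :
    vertexRatio (G □ H) ((Set.univ : Set V) ×ˢ s) (v, w)
      = (((H.neighborSet w ∩ (if w ∈ s then s else sᶜ)).ncard : ℝ)
          + ((G.neighborSet v).ncard : ℝ) + 1)
        / (((H.neighborSet w).ncard : ℝ) + ((G.neighborSet v).ncard : ℝ) + 1) := by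
  unfold vertexRatio
  rw [boxProd_nbhd_ncard]
  by_cases hws : w ∈ s
  · rw [if_pos (show (v, w) ∈ (Set.univ : Set V) ×ˢ s from ⟨Set.mem_univ _, hws⟩),
      if_pos hws, boxProd_inter_right G H v w s hws,
      ncard_mixed_union (v := v) (w := w) (G.neighborSet v) (H.neighborSet w ∩ s)
        (fun a ha => (G.ne_of_adj ha).symm)]
    push_cast
    ring_nf
  · rw [if_neg (show (v, w) ∉ (Set.univ : Set V) ×ˢ s from fun h => hws h.2),
      if_neg hws, univ_prod_compl, boxProd_inter_right G H v w sᶜ hws,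
      ncard_mixed_union (v := v) (w := w) (G.neighborSet v) (H.neighborSet w ∩ sᶜ)
        (fun a ha => (G.ne_of_adj ha).symm)]
    push_cast
    ring_nf

lemma key_left (G : SimpleGraph V) (H : SimpleGraph W)
    (hG : G.Connected) (hH : H.Connected) (hV : Nontrivial V) (hW : Nontrivial W) :
    degreeRatio G < degreeRatio (G □ H) := by
  have : Nonempty V := hV.to_nonempty
  have : Nonempty W := hW.to_nonempty
  obtain ⟨s, hs, hs', hval⟩ : ∃ s : Set V, s.Nonempty ∧ sᶜ.Nonempty ∧
      degreeRatio G = minRatio G s :=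
    (degSet_nonempty G hV).csSup_mem (degSet_finite G)
  have hq1 : degreeRatio G < 1 := hval ▸ minRatio_lt_one hG hs hs'
  have hstep : degreeRatio G < minRatio (G □ H) (s ×ˢ (Set.univ : Set W)) := by
    obtain ⟨⟨v, w⟩, hvw⟩ := minRatio_attained (G □ H) (s ×ˢ (Set.univ : Set W))
    rw [hvw]
    rw [vertexRatio_boxProd_left G H s v w]
    have hab : (G.neighborSet v ∩ (if v ∈ s then s else sᶜ)).ncard
        ≤ (G.neighborSet v).ncard :=
      Set.ncard_le_ncard Set.inter_subset_left (Set.toFinite _)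
    have hc : 1 ≤ (H.neighborSet w).ncard :=
      (Set.ncard_pos (Set.toFinite _)).mpr (exists_neighbor hH hW w)
    refine ratio_step hab hc hq1 ?_
    have := minRatio_le G s v
    unfold vertexRatio at this
    exact hval ▸ this
  refine lt_of_lt_of_le hstep (le_csSup (degSet_finite (G □ H)).bddAbove ?_)
  obtain ⟨v₀, hv₀⟩ := hs
  obtain ⟨v₁, hv₁⟩ := hs'
  obtain ⟨w₀⟩ := ‹Nonempty W›
  exact ⟨s ×ˢ (Set.univ : Set W), ⟨(v₀, w₀), hv₀, Set.mem_univ _⟩,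
    ⟨(v₁, w₀), by rw [compl_prod_univ]; exact ⟨hv₁, Set.mem_univ _⟩⟩, rfl⟩

lemma key_right (G : SimpleGraph V) (H : SimpleGraph W)
    (hG : G.Connected) (hH : H.Connected) (hV : Nontrivial V) (hW : Nontrivial W) :
    degreeRatio H < degreeRatio (G □ H) := by
  have : Nonempty V := hV.to_nonempty
  have : Nonempty W := hW.to_nonempty
  obtain ⟨s, hs, hs', hval⟩ : ∃ s : Set W, s.Nonempty ∧ sᶜ.Nonempty ∧
      degreeRatio H = minRatio H s :=
    (degSet_nonempty H hW).csSup_mem (degSet_finite H)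
  have hq1 : degreeRatio H < 1 := hval ▸ minRatio_lt_one hH hs hs'
  have hstep : degreeRatio H < minRatio (G □ H) ((Set.univ : Set V) ×ˢ s) := by
    obtain ⟨⟨v, w⟩, hvw⟩ := minRatio_attained (G □ H) ((Set.univ : Set V) ×ˢ s)
    rw [hvw]
    rw [vertexRatio_boxProd_right G H s v w]
    have hab : (H.neighborSet w ∩ (if w ∈ s then s else sᶜ)).ncard
        ≤ (H.neighborSet w).ncard :=
      Set.ncard_le_ncard Set.inter_subset_left (Set.toFinite _)
    have hc : 1 ≤ (G.neighborSet v).ncard :=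
      (Set.ncard_pos (Set.toFinite _)).mpr (exists_neighbor hG hV v)
    refine ratio_step hab hc hq1 ?_
    have := minRatio_le H s w
    unfold vertexRatio at this
    exact hval ▸ this
  refine lt_of_lt_of_le hstep (le_csSup (degSet_finite (G □ H)).bddAbove ?_)
  obtain ⟨w₀, hw₀⟩ := hs
  obtain ⟨w₁, hw₁⟩ := hs'
  obtain ⟨v₀⟩ := ‹Nonempty V›
  exact ⟨(Set.univ : Set V) ×ˢ s, ⟨(v₀, w₀), Set.mem_univ _, hw₀⟩,
    ⟨(v₀, w₁), by rw [univ_prod_compl]; exact ⟨Set.mem_univ _, hw₁⟩⟩, rfl⟩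

end Aux

theorem stmt_16 {V W : Type*} [Fintype V] [Fintype W]
    (G : SimpleGraph V) (H : SimpleGraph W)
    (hG : G.Connected) (hH : H.Connected) (hV : Nontrivial V) (hW : Nontrivial W) :
    max (degreeRatio G) (degreeRatio H) < degreeRatio (G □ H) := by
  exact max_lt (key_left G H hG hH hV hW) (key_right G H hG hH hV hW)
end
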